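/- Let P : S(H) × S(H) → ℝ≥0 be any function on pairs of density operators satisfying: (A1, triangle inequality) P(ρ,σ) ≤ P(ρ,ω) + P(ω,σ) for all ω; (A2, symmetry) P(ρ,σ) = P(σ,ρ); (A3, operational bound) whenever ρ = (1−ε)σ + εσ′ for some ε ∈ [0,1] and density operator σ′, one has P(ρ,σ) ≤ ε. Then P(ρ,σ) ≤ ‖ρ − σ‖₁ for all density operators ρ, σ. -/

import Mathlib

open Matrix BigOperators ComplexOrder

variable {n : Type*} [Fintype n] [DecidableEq n]

/-- Trace norm (Schatten 1-norm) of a matrix. -/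
noncomputable def traceNorm (A : Matrix n n ℂ) : ℝ :=
  (((Matrix.posSemidef_conjTranspose_mul_self A).1.eigenvectorUnitary.1 *
      diagonal (((↑) : ℝ → ℂ) ∘ (√·) ∘ (Matrix.posSemidef_conjTranspose_mul_self A).1.eigenvalues) *
      (star (Matrix.posSemidef_conjTranspose_mul_self A).1.eigenvectorUnitary : Matrix n n ℂ)).trace).re

/-- A density operator: positive semidefinite with trace 1. -/
def IsDensity (ρ : Matrix n n ℂ) : Prop := ρ.PosSemidef ∧ ρ.trace = 1

set_option linter.unusedSectionVars false

lemma posSemidef_real_smul {A : Matrix n n ℂ} (hA : A.PosSemidef) {r : ℝ} (hr : 0 ≤ r) :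
    (r • A).PosSemidef := by
  refine ⟨?_, fun x => ?_⟩
  · rw [Matrix.IsHermitian, conjTranspose_smul, star_trivial, hA.1.eq]
  · exact (hA.smul hr).2 x

section cong
variable {Δ : Matrix n n ℂ} (hΔ : Δ.IsHermitian)

noncomputable def cong (hΔ : Δ.IsHermitian) (d : n → ℝ) : Matrix n n ℂ :=
  (hΔ.eigenvectorUnitary : Matrix n n ℂ) * diagonal (fun i => (d i : ℂ)) *
    star (hΔ.eigenvectorUnitary : Matrix n n ℂ)

lemma cong_mul (d e : n → ℝ) : cong hΔ d * cong hΔ e = cong hΔ (d * e) := by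
  have h1 : star (hΔ.eigenvectorUnitary : Matrix n n ℂ) *
      (hΔ.eigenvectorUnitary : Matrix n n ℂ) = 1 :=
    Matrix.mem_unitaryGroup_iff'.mp hΔ.eigenvectorUnitary.2
  have hd : (diagonal fun i => ((d i : ℂ))) * (diagonal fun i => ((e i : ℂ)))
      = diagonal fun i => (((d * e) i : ℝ) : ℂ) := by
    rw [diagonal_mul_diagonal]
    congr 1
    funext i
    push_cast [Pi.mul_apply]
    ring
  have hcol : ∀ X : Matrix n n ℂ, star (hΔ.eigenvectorUnitary : Matrix n n ℂ) *
      ((hΔ.eigenvectorUnitary : Matrix n n ℂ) * X) = X := fun X => by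
    rw [← Matrix.mul_assoc, h1, Matrix.one_mul]
  simp only [cong, Matrix.mul_assoc, hcol]
  simp only [← Matrix.mul_assoc]
  rw [Matrix.mul_assoc (hΔ.eigenvectorUnitary : Matrix n n ℂ) (diagonal _) (diagonal _), hd]

lemma cong_sub (d e : n → ℝ) : cong hΔ d - cong hΔ e = cong hΔ (d - e) := by
  have hd : (diagonal fun i => ((d i : ℂ))) - (diagonal fun i => ((e i : ℂ)))
      = diagonal fun i => (((d - e) i : ℝ) : ℂ) := by
    rw [diagonal_sub]
    congr 1
    funext i
    push_cast [Pi.sub_apply]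
    ring
  simp only [cong, ← Matrix.sub_mul, ← Matrix.mul_sub, hd]

lemma cong_add (d e : n → ℝ) : cong hΔ d + cong hΔ e = cong hΔ (d + e) := by
  have hd : (diagonal fun i => ((d i : ℂ))) + (diagonal fun i => ((e i : ℂ)))
      = diagonal fun i => (((d + e) i : ℝ) : ℂ) := by
    rw [diagonal_add]
    congr 1
    funext i
    push_cast [Pi.add_apply]
    ring
  simp only [cong, ← Matrix.add_mul, ← Matrix.mul_add, hd]

lemma cong_trace (d : n → ℝ) : (cong hΔ d).trace = ∑ i, (d i : ℂ) := by
  have h1 : star (hΔ.eigenvectorUnitary : Matrix n n ℂ) *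
      (hΔ.eigenvectorUnitary : Matrix n n ℂ) = 1 :=
    Matrix.mem_unitaryGroup_iff'.mp hΔ.eigenvectorUnitary.2
  rw [cong, Matrix.trace_mul_cycle, h1, Matrix.one_mul, trace_diagonal]

lemma cong_psd {d : n → ℝ} (hd : ∀ i, 0 ≤ d i) : (cong hΔ d).PosSemidef := by
  refine Matrix.PosSemidef.mul_mul_conjTranspose_same ?_ _
  refine posSemidef_diagonal_iff.mpr fun i => ?_
  exact_mod_cast hd i

lemma cong_eigenvalues : cong hΔ hΔ.eigenvalues = Δ := (hΔ.spectral_theorem).symm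

end cong

theorem axioms_imply_traceNorm_bound
    (P : Matrix n n ℂ → Matrix n n ℂ → ℝ)
    (hnonneg : ∀ ρ σ, IsDensity ρ → IsDensity σ → 0 ≤ P ρ σ)
    (hA1 : ∀ ρ σ ω, IsDensity ρ → IsDensity σ → IsDensity ω →
      P ρ σ ≤ P ρ ω + P ω σ)
    (hA2 : ∀ ρ σ, IsDensity ρ → IsDensity σ → P ρ σ = P σ ρ)
    (hA3 : ∀ ρ σ σ' : Matrix n n ℂ, ∀ ε : ℝ, IsDensity ρ → IsDensity σ → IsDensity σ' →
      ε ∈ Set.Icc (0:ℝ) 1 → ρ = (1 - ε) • σ + ε • σ' → P ρ σ ≤ ε) :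
    ∀ ρ σ, IsDensity ρ → IsDensity σ → P ρ σ ≤ traceNorm (ρ - σ) := by
  intro ρ σ hρ hσ
  have hΔ : (ρ - σ).IsHermitian := hρ.1.1.sub hσ.1.1
  set lam : n → ℝ := hΔ.eigenvalues with hlam
  set dp : n → ℝ := fun i => max (lam i) 0 with hdp
  set dm : n → ℝ := fun i => max (-lam i) 0 with hdm
  set Pm := cong hΔ dp with hPm
  set Nm := cong hΔ dm with hNm
  have hPmpsd : Pm.PosSemidef := cong_psd hΔ fun i => le_max_right _ _
  have hNmpsd : Nm.PosSemidef := cong_psd hΔ fun i => le_max_right _ _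
  have hsub : Pm - Nm = ρ - σ := by
    rw [hPm, hNm, cong_sub]
    have h : dp - dm = lam := by
      funext i
      simp only [hdp, hdm, Pi.sub_apply]
      rcases le_total (lam i) 0 with h | h
      · rw [max_eq_right h, max_eq_left (by linarith : (0:ℝ) ≤ -lam i)]; ring
      · rw [max_eq_left h, max_eq_right (by linarith : -lam i ≤ (0:ℝ))]; ring
    rw [h, cong_eigenvalues]
  have htr0 : ∑ i, lam i = 0 := by
    have h1 : (ρ - σ).trace = 0 := by
      rw [Matrix.trace_sub, hρ.2, hσ.2, sub_self]
    have h2 : (ρ - σ).trace = ∑ i, (lam i : ℂ) := by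
      rw [← cong_eigenvalues (hΔ := hΔ), cong_trace]
    rw [h2] at h1
    have h3 : ((∑ i, lam i : ℝ) : ℂ) = 0 := by push_cast; exact h1
    exact_mod_cast h3
  set ε : ℝ := ∑ i, dp i with hε
  have hε0 : 0 ≤ ε := Finset.sum_nonneg fun i _ => le_max_right _ _
  have hdmsum : ∑ i, dm i = ε := by
    rw [hε]
    have h : ∀ i, dm i = dp i - lam i := by
      intro i; simp only [hdp, hdm]; rcases le_total (lam i) 0 with h | h
      · rw [max_eq_left (by linarith : (0:ℝ) ≤ -lam i), max_eq_right h]; ring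
      · rw [max_eq_right (by linarith : -lam i ≤ (0:ℝ)), max_eq_left h]; ring
    simp_rw [h, Finset.sum_sub_distrib, htr0, sub_zero]
  have habs : ∀ i, dp i + dm i = |lam i| := by
    intro i; simp only [hdp, hdm]; rcases le_total (lam i) 0 with h | h
    · rw [max_eq_right h, max_eq_left (by linarith : (0:ℝ) ≤ -lam i), abs_of_nonpos h]; ring
    · rw [max_eq_left h, max_eq_right (by linarith : -lam i ≤ (0:ℝ)), abs_of_nonneg h]; ring
  have hsqrt : ((Matrix.posSemidef_conjTranspose_mul_self (ρ - σ)).1.eigenvectorUnitary.1 *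
      diagonal (((↑) : ℝ → ℂ) ∘ (√·) ∘ (Matrix.posSemidef_conjTranspose_mul_self (ρ - σ)).1.eigenvalues) *
      (star (Matrix.posSemidef_conjTranspose_mul_self (ρ - σ)).1.eigenvectorUnitary : Matrix n n ℂ))
      = Pm + Nm := by
    have hB := (Matrix.posSemidef_conjTranspose_mul_self (ρ - σ)).1
    have e2 : (ρ - σ)ᴴ * (ρ - σ) = cfc (fun x : ℝ => x ^ 2) (ρ - σ) := by
      rw [cfc_pow_id (ρ - σ) 2 hΔ.isSelfAdjoint, hΔ.eq, sq]
    have hf : (Real.sqrt ∘ fun x : ℝ => x ^ 2) = fun x => |x| := funext fun x => Real.sqrt_sq_eq_abs x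
    calc _ = cfc Real.sqrt ((ρ - σ)ᴴ * (ρ - σ)) := by rw [hB.cfc_eq]; rfl
      _ = cfc (fun x : ℝ => |x|) (ρ - σ) := by
        rw [e2, ← cfc_comp Real.sqrt (fun x : ℝ => x ^ 2) (ρ - σ) hΔ.isSelfAdjoint, hf]
      _ = Pm + Nm := by
        rw [hΔ.cfc_eq, IsHermitian.cfc, Unitary.conjStarAlgAut_apply, hPm, hNm, cong_add, cong]
        congr 2
        congr 1
        funext i
        simp only [Function.comp_apply, Pi.add_apply, habs i]
        rfl
  have htn : traceNorm (ρ - σ) = 2 * ε := by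
    rw [traceNorm, hsqrt, hPm, hNm, cong_add, cong_trace]
    have h : ∑ i, (((dp + dm) i : ℝ) : ℂ) = ((∑ i, (dp i + dm i) : ℝ) : ℂ) := by
      push_cast [Pi.add_apply]
      rfl
    rw [h, Complex.ofReal_re, Finset.sum_add_distrib, ← hε, hdmsum]
    ring
  rw [htn]
  have htrPm : Pm.trace = (ε : ℂ) := by
    rw [hPm, cong_trace, hε]; push_cast; rfl
  have htrNm : Nm.trace = (ε : ℂ) := by
    rw [hNm, cong_trace, ← hdmsum]; push_cast; rfl
  rcases eq_or_lt_of_le hε0 with hε0' | hεpos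
  · -- ε = 0, so ρ = σ
    have hs : ∑ i, dp i = 0 := by rw [← hε]; exact hε0'.symm
    have hsm : ∑ i, dm i = 0 := by rw [hdmsum]; exact hε0'.symm
    have hdpz : ∀ i, dp i = 0 := fun i =>
      (Finset.sum_eq_zero_iff_of_nonneg (fun i _ => le_max_right _ _)).mp hs i (Finset.mem_univ i)
    have hdmz : ∀ i, dm i = 0 := fun i =>
      (Finset.sum_eq_zero_iff_of_nonneg (fun i _ => le_max_right _ _)).mp hsm i (Finset.mem_univ i)
    have hρσ : ρ = σ := by
      have hdd : dp = dm := by funext i; rw [hdpz i, hdmz i]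
      have hPN : Pm = Nm := by rw [hPm, hNm, hdd]
      have h0 : ρ - σ = 0 := by rw [← hsub, hPN, sub_self]
      exact sub_eq_zero.mp h0
    have hP0 : P ρ σ ≤ 0 := by
      refine hA3 ρ σ σ 0 hρ hσ hσ ⟨le_refl _, zero_le_one⟩ ?_
      rw [hρσ]
      norm_num
    linarith
  · -- ε > 0
    have h1ε : (0:ℝ) < 1 + ε := by linarith
    set ε' : ℝ := ε / (1 + ε) with hε'
    set ω : Matrix n n ℂ := (1 + ε)⁻¹ • (ρ + Nm) with hω
    set ρ' : Matrix n n ℂ := ε⁻¹ • Nm with hρ'def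
    set σ' : Matrix n n ℂ := ε⁻¹ • Pm with hσ'def
    have hρ'd : IsDensity ρ' := by
      refine ⟨posSemidef_real_smul hNmpsd (by positivity), ?_⟩
      rw [hρ'def, Matrix.trace_smul, htrNm, Complex.real_smul]
      push_cast
      field_simp
    have hσ'd : IsDensity σ' := by
      refine ⟨posSemidef_real_smul hPmpsd (by positivity), ?_⟩
      rw [hσ'def, Matrix.trace_smul, htrPm, Complex.real_smul]
      push_cast
      field_simp
    have hωd : IsDensity ω := by
      refine ⟨posSemidef_real_smul (hρ.1.add hNmpsd) (by positivity), ?_⟩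
      rw [hω, Matrix.trace_smul, Matrix.trace_add, hρ.2, htrNm, Complex.real_smul]
      push_cast
      field_simp
    have hε'mem : ε' ∈ Set.Icc (0:ℝ) 1 :=
      ⟨div_nonneg hε0 h1ε.le, (div_le_one h1ε).mpr (by linarith)⟩
    have h1me : 1 - ε' = (1 + ε)⁻¹ := by
      rw [hε']; field_simp; ring
    have hc : ε' * ε⁻¹ = (1 + ε)⁻¹ := by
      rw [hε']; field_simp
    have hdecρ : ω = (1 - ε') • ρ + ε' • ρ' := by
      rw [hω, smul_add, hρ'def, smul_smul, hc, h1me]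
    have hdecσ : ω = (1 - ε') • σ + ε' • σ' := by
      have hadd : ρ + Nm = σ + Pm := by
        have h := sub_eq_sub_iff_add_eq_add.mp hsub
        calc ρ + Nm = Pm + σ := h.symm
        _ = σ + Pm := add_comm _ _
      rw [hω, hadd, smul_add, hσ'def, smul_smul, hc, h1me]
    have key1 : P ω ρ ≤ ε' := hA3 ω ρ ρ' ε' hωd hρ hρ'd hε'mem hdecρ
    have key2 : P ω σ ≤ ε' := hA3 ω σ σ' ε' hωd hσ hσ'd hε'mem hdecσ
    have h3 := hA1 ρ σ ω hρ hσ hωd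
    rw [hA2 ρ ω hρ hωd] at h3
    have hε'le : ε' ≤ ε := div_le_self hε0 (by linarith)
    linarith
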